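/- Fix x ∈ ℂ and k ≥ 1, and assume p_i'(x) ≠ 0 for i = 1, …, k, where p_i are the Mandelbrot polynomials. Define sequences by q̂_0 = 1 + x, d_0 = 1, α_0 = 1, and for i ≥ 0: v_i = 2x·q̂_i·d_i + q̂_i², β_i = 1/|v_i|, d_{i+1} = v_i·β_i, q̂_{i+1} = (x·q̂_i² + α_i²)·β_i, α_{i+1} = α_i²·β_i. Then for every 0 ≤ i ≤ k−1: v_i ≠ 0 (for i ≤ k−2), α_i = 1/|p_{i+1}'(x)|, q̂_i = α_i·p_{i+1}(x), d_i = α_i·p_{i+1}'(x), and |d_i| = 1; in particular q̂_{k-1}/d_{k-1} = p_k(x)/p_k'(x). -/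

import Mathlib

open Polynomial

/-- The Mandelbrot polynomials `p_0(X) = 1`, `p_{j+1}(X) = X·p_j(X)^2 + 1`. -/
noncomputable def mandelbrotP : ℕ → Polynomial ℂ
  | 0 => 1
  | (j + 1) => X * (mandelbrotP j) ^ 2 + 1

lemma mandelbrotP_deriv_eval (x : ℂ) (j : ℕ) :
    (derivative (mandelbrotP (j + 1))).eval x =
      (mandelbrotP j).eval x ^ 2 +
        2 * x * (mandelbrotP j).eval x * (derivative (mandelbrotP j)).eval x := by
  simp [mandelbrotP, derivative_pow]
  ring

theorem stmt_13 (x : ℂ) (k : ℕ) (hk : 1 ≤ k)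
    (hder : ∀ i : ℕ, 1 ≤ i → i ≤ k → (derivative (mandelbrotP i)).eval x ≠ 0)
    (qh d v : ℕ → ℂ) (α β : ℕ → ℝ)
    (hq0 : qh 0 = 1 + x) (hd0 : d 0 = 1) (hα0 : α 0 = 1)
    (hv : ∀ i : ℕ, v i = 2 * x * qh i * d i + (qh i) ^ 2)
    (hβ : ∀ i : ℕ, β i = 1 / ‖v i‖)
    (hd : ∀ i : ℕ, d (i + 1) = v i * (β i : ℂ))
    (hq : ∀ i : ℕ, qh (i + 1) = (x * (qh i) ^ 2 + ((α i : ℂ)) ^ 2) * (β i : ℂ))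
    (hα : ∀ i : ℕ, α (i + 1) = (α i) ^ 2 * β i) :
    (∀ i : ℕ, i + 1 ≤ k →
      (i + 2 ≤ k → v i ≠ 0) ∧
      α i = 1 / ‖(derivative (mandelbrotP (i + 1))).eval x‖ ∧
      qh i = (α i : ℂ) * (mandelbrotP (i + 1)).eval x ∧
      d i = (α i : ℂ) * (derivative (mandelbrotP (i + 1))).eval x ∧
      ‖d i‖ = 1) ∧
    qh (k - 1) / d (k - 1) =
      (mandelbrotP k).eval x / (derivative (mandelbrotP k)).eval x := by
  -- main induction
  have aux : ∀ i : ℕ, i + 1 ≤ k →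
      α i = 1 / ‖(derivative (mandelbrotP (i + 1))).eval x‖ ∧
      qh i = (α i : ℂ) * (mandelbrotP (i + 1)).eval x ∧
      d i = (α i : ℂ) * (derivative (mandelbrotP (i + 1))).eval x := by
    intro i
    induction i with
    | zero =>
      intro _
      have h1 : (derivative (mandelbrotP 1)).eval x = 1 := by
        simp [mandelbrotP]
      have h2 : (mandelbrotP 1).eval x = x + 1 := by
        simp [mandelbrotP]
      refine ⟨?_, ?_, ?_⟩
      · simp [hα0, h1]
      · simp [hq0, hα0, h2]; ring
      · simp [hd0, hα0, h1]
    | succ i ih =>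
      intro hik
      have hik1 : i + 1 ≤ k := by omega
      obtain ⟨ha, hqe, hde⟩ := ih hik1
      set P := (mandelbrotP (i + 1)).eval x with hP
      set P' := (derivative (mandelbrotP (i + 1))).eval x with hP'
      have hP'ne : P' ≠ 0 := hder (i + 1) (by omega) (by omega)
      have hQ' : (derivative (mandelbrotP (i + 2))).eval x = P ^ 2 + 2 * x * P * P' :=
        mandelbrotP_deriv_eval x (i + 1)
      set Q' := (derivative (mandelbrotP (i + 2))).eval x with hQ'def
      have hQ'ne : Q' ≠ 0 := hder (i + 2) (by omega) (by omega)
      have haq : (0 : ℝ) < α i := by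
        rw [ha]
        exact div_pos one_pos (norm_pos_iff.mpr hP'ne)
      have hane : (α i : ℂ) ≠ 0 := by exact_mod_cast haq.ne'
      have hvi : v i = (α i : ℂ) ^ 2 * Q' := by
        rw [hv, hqe, hde, hQ']
        ring
      have habs : ‖v i‖ = (α i) ^ 2 * ‖Q'‖ := by
        rw [hvi]
        simp [norm_mul, norm_pow, Complex.norm_real, Real.norm_eq_abs, abs_of_pos haq]
      have hQ'abs : (0 : ℝ) < ‖Q'‖ := by
        simpa [norm_pos_iff] using hQ'ne
      have hβi : β i = 1 / ((α i) ^ 2 * ‖Q'‖) := by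
        rw [hβ, habs]
      have haS : α (i + 1) = 1 / ‖Q'‖ := by
        rw [hα, hβi]
        field_simp
      have hcne : ((‖Q'‖ : ℝ) : ℂ) ≠ 0 := by exact_mod_cast hQ'abs.ne'
      refine ⟨haS, ?_, ?_⟩
      · rw [hq, hqe, hβi]
        have : (mandelbrotP (i + 2)).eval x = x * P ^ 2 + 1 := by
          rw [show mandelbrotP (i + 2) = X * (mandelbrotP (i + 1)) ^ 2 + 1 from rfl]
          simp [hP]
        rw [this, haS]
        push_cast
        field_simp
      · rw [hd, hvi, hβi, haS]
        push_cast
        field_simp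
  constructor
  · intro i hik
    obtain ⟨ha, hqe, hde⟩ := aux i hik
    have hP'ne : (derivative (mandelbrotP (i + 1))).eval x ≠ 0 :=
      hder (i + 1) (by omega) (by omega)
    have haq : (0 : ℝ) < α i := by
      rw [ha]; exact div_pos one_pos (norm_pos_iff.mpr hP'ne)
    have hane : (α i : ℂ) ≠ 0 := by exact_mod_cast haq.ne'
    refine ⟨?_, ha, hqe, hde, ?_⟩
    · intro hik2
      have hQ'ne : (derivative (mandelbrotP (i + 2))).eval x ≠ 0 :=
        hder (i + 2) (by omega) hik2
      have hvi : v i = (α i : ℂ) ^ 2 * (derivative (mandelbrotP (i + 2))).eval x := by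
        rw [hv, hqe, hde, mandelbrotP_deriv_eval x (i + 1)]
        ring
      rw [hvi]
      exact mul_ne_zero (pow_ne_zero _ hane) hQ'ne
    · rw [hde]
      rw [norm_mul, Complex.norm_real, Real.norm_eq_abs, abs_of_pos haq, ha]
      rw [div_mul_cancel₀]
      simpa [norm_ne_zero_iff] using hP'ne
  · obtain ⟨ha, hqe, hde⟩ := aux (k - 1) (by omega)
    have hk1 : k - 1 + 1 = k := by omega
    rw [hk1] at ha hqe hde
    have hP'ne : (derivative (mandelbrotP k)).eval x ≠ 0 := hder k hk le_rfl
    have haq : (0 : ℝ) < α (k - 1) := by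
      rw [ha]; exact div_pos one_pos (norm_pos_iff.mpr hP'ne)
    have hane : (α (k - 1) : ℂ) ≠ 0 := by exact_mod_cast haq.ne'
    rw [hqe, hde, mul_div_mul_left _ _ hane]
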